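/- Conversely, if the origin lies in the interior of the convex hull of the image of a continuous curve T : [0, s_f] → S², i.e., there exists a continuous positive weight λ : [0,s_f] → ℝ with λ(s) > 0 for all s, ∫₀^{s_f} λ(s) ds = 1, and ∫₀^{s_f} λ(s) T(s) ds = 0, then for any T > 0 the reparameterization defined by dt/ds = T·λ(s) yields a curve R(t) = ∫₀^T T(s(t)) dt with R(T) = 0 (a closed space curve). -/

import Mathlib

open intervalIntegral Set

/-- if the origin is in the interior of the convex hull of the
spherical curve `T`, witnessed by a continuous positive weight `lam`, then the
reparameterization `s` inverse to `t(s) = Tf·∫₀ˢ lam` yields a closed space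
curve: `∫₀^{Tf} T(s(t)) dt = 0`. -/
theorem stmt_1 (sf Tf : ℝ) (hsf : 0 < sf) (hTf : 0 < Tf)
    (T : ℝ → (Fin 3 → ℝ)) (hTcont : ContinuousOn T (Icc 0 sf))
    (hTunit : ∀ u ∈ Icc (0:ℝ) sf, (T u 0)^2 + (T u 1)^2 + (T u 2)^2 = 1)
    (lam : ℝ → ℝ) (hlamcont : Continuous lam)
    (hlampos : ∀ u ∈ Icc (0:ℝ) sf, 0 < lam u)
    (hlamnorm : ∫ u in (0:ℝ)..sf, lam u = 1)
    (hzero : ∫ u in (0:ℝ)..sf, lam u • T u = 0)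
    (s : ℝ → ℝ) (hmaps : MapsTo s (Icc 0 Tf) (Icc 0 sf))
    (hinv : ∀ u ∈ Icc (0:ℝ) sf, s (Tf * ∫ v in (0:ℝ)..u, lam v) = u) :
    ∫ t in (0:ℝ)..Tf, T (s t) = 0 := by
  set f : ℝ → ℝ := fun u => Tf * ∫ v in (0:ℝ)..u, lam v with hf_def
  have hderiv : ∀ u : ℝ, HasDerivAt f (Tf * lam u) u := by
    intro u
    have h1 : HasDerivAt (fun u => ∫ v in (0:ℝ)..u, lam v) (lam u) u :=
      intervalIntegral.integral_hasDerivAt_right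
        (hlamcont.intervalIntegrable _ _)
        (hlamcont.stronglyMeasurableAtFilter _ _)
        hlamcont.continuousAt
    simpa using h1.const_mul Tf
  have hfc : Continuous f := by
    rw [continuous_iff_continuousAt]
    exact fun u => (hderiv u).continuousAt
  have hf0 : f 0 = 0 := by simp [hf_def]
  have hfsf : f sf = Tf := by simp [hf_def, hlamnorm]
  have huIcc : uIcc (0:ℝ) sf = Icc 0 sf := uIcc_of_le hsf.le
  have hmono : StrictMonoOn f (Icc 0 sf) := by
    apply strictMonoOn_of_deriv_pos (convex_Icc 0 sf) hfc.continuousOn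
    intro x hx
    rw [interior_Icc] at hx
    rw [(hderiv x).deriv]
    exact mul_pos hTf (hlampos x (Ioo_subset_Icc_self hx))
  have himg : f '' Icc 0 sf = Icc 0 Tf := by
    apply Subset.antisymm
    · rintro y ⟨u, hu, rfl⟩
      rw [← hf0, ← hfsf]
      exact ⟨hmono.monotoneOn (left_mem_Icc.2 hsf.le) hu hu.1,
        hmono.monotoneOn hu (right_mem_Icc.2 hsf.le) hu.2⟩
    · have := intermediate_value_Icc hsf.le hfc.continuousOn
      rw [hf0, hfsf] at this
      exact this
  have hsf' : ∀ u ∈ Icc (0:ℝ) sf, s (f u) = u := hinv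
  -- Build a homeomorphism from [0,sf] to [0,Tf] via f
  have hinj : InjOn f (Icc 0 sf) := hmono.injOn
  have hsurj : ∀ y : Icc (0:ℝ) Tf, ∃ u : Icc (0:ℝ) sf, f u = y := by
    intro y
    have hy : (y : ℝ) ∈ f '' Icc 0 sf := by rw [himg]; exact y.2
    obtain ⟨u, hu, huy⟩ := hy
    exact ⟨⟨u, hu⟩, huy⟩
  let e : Icc (0:ℝ) sf ≃ Icc (0:ℝ) Tf :=
    Equiv.ofBijective (fun u => ⟨f u, himg ▸ mem_image_of_mem f u.2⟩)
      ⟨fun a b hab => Subtype.ext (hinj a.2 b.2 (congrArg Subtype.val hab)),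
       fun y => by obtain ⟨u, hu⟩ := hsurj y; exact ⟨u, Subtype.ext hu⟩⟩
  have hec : Continuous e := by
    apply Continuous.subtype_mk
    exact hfc.comp continuous_subtype_val
  let H : Icc (0:ℝ) sf ≃ₜ Icc (0:ℝ) Tf := hec.homeoOfEquivCompactToT2
  have hsval : ∀ y : Icc (0:ℝ) Tf, s y = (H.symm y : ℝ) := by
    intro y
    have h1 : f (H.symm y : ℝ) = (y : ℝ) := by
      have := H.apply_symm_apply y
      exact congrArg Subtype.val this
    rw [← h1]
    exact hsf' _ (H.symm y).2
  have hg : ContinuousOn (T ∘ s) (f '' uIcc 0 sf) := by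
    rw [huIcc, himg]
    rw [continuousOn_iff_continuous_restrict]
    have heq : domRestrict (Icc (0:ℝ) Tf) (T ∘ s)
        = (domRestrict (Icc (0:ℝ) sf) T) ∘ H.symm := by
      funext y
      simp only [domRestrict, Function.comp_apply]
      rw [hsval y]
    rw [heq]
    exact (continuousOn_iff_continuous_restrict.mp hTcont).comp H.symm.continuous
  have hcv : (∫ x in (0:ℝ)..sf, (Tf * lam x) • ((T ∘ s) ∘ f) x)
      = ∫ u in (f 0)..(f sf), (T ∘ s) u := by
    apply intervalIntegral.integral_comp_smul_deriv'' hfc.continuousOn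
    · intro x _
      exact (hderiv x).hasDerivWithinAt
    · exact (continuous_const.mul hlamcont).continuousOn
    · exact hg
  rw [hf0, hfsf] at hcv
  have hlhs : (∫ x in (0:ℝ)..sf, (Tf * lam x) • ((T ∘ s) ∘ f) x)
      = ∫ x in (0:ℝ)..sf, Tf • (lam x • T x) := by
    apply intervalIntegral.integral_congr
    intro x hx
    rw [huIcc] at hx
    simp only [Function.comp_apply, hsf' x hx, mul_smul]
  have : (∫ u in (0:ℝ)..Tf, (T ∘ s) u) = 0 := by
    rw [← hcv, hlhs, intervalIntegral.integral_smul, hzero, smul_zero]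
  simpa [Function.comp] using this
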